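/- (Bellman function for α ∈ (1/2,1], inequalities (4.7)–(4.8).) Let 1/2 < α ≤ 1 and define B(x,y) := (xy)^{1/2} − (1/4)(xy)^α on D := {(x,y) : x ≥ 0, y ≥ 0, xy ≤ 1}. Then: (a) 0 ≤ B(x,y) ≤ (xy)^{1/2} for all (x,y) ∈ D; and (b) there is a constant c_α > 0, depending only on α, such that whenever (x,y) ∈ D with x, y > 0 and (x₊,y₊), (x₋,y₋) ∈ D satisfy x = (x₊+x₋)/2, y = (y₊+y₋)/2, and the entire segment joining (x₋,y₋) to (x₊,y₊) lies in D (i.e. (x + tξ)(y + tη) ≤ 1 for all t ∈ [−1,1], where ξ = (x₊−x₋)/2, η = (y₊−y₋)/2), then B(x,y) − (B(x₊,y₊) + B(x₋,y₋))/2 ≥ c_α (xy)^α (|x₊ − x₋|/x)(|y₊ − y₋|/y). -/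

import Mathlib

/-!
Bellman function for `α ∈ (1/2,1]` (inequalities (4.7)–(4.8)):
`B(x,y) = (xy)^{1/2} - (1/4)(xy)^α` on `D = {x ≥ 0, y ≥ 0, xy ≤ 1}` satisfies
`0 ≤ B ≤ (xy)^{1/2}` and the quantitative midpoint concavity inequality with
gain `c_α (xy)^α (|x₊-x₋|/x)(|y₊-y₋|/y)`, provided the whole segment joining
`(x₋,y₋)` to `(x₊,y₊)` stays in `D`.
-/

open Real


/-- log x - (x-1) + (x-1)^2/2 is monotone on [a,b] ⊂ (0,∞); hence bounds for log. -/
private lemma g_mono {a b : ℝ} (ha : 0 < a) (hab : a ≤ b) :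
    Real.log a - (a - 1) + (a - 1)^2/2 ≤ Real.log b - (b - 1) + (b - 1)^2/2 := by
  have hd : ∀ x ∈ Set.Icc a b, HasDerivAt (fun y : ℝ => Real.log y - (y - 1) + (y - 1)^2/2)
      ((x - 1)^2 / x) x := by
    intro x hx
    have hx0 : 0 < x := lt_of_lt_of_le ha hx.1
    have h1 : HasDerivAt Real.log x⁻¹ x := Real.hasDerivAt_log hx0.ne'
    have h2 : HasDerivAt (fun y : ℝ => y - 1) 1 x := (hasDerivAt_id x).sub_const 1
    have h3 : HasDerivAt (fun y : ℝ => (y - 1)^2/2) (x - 1) x := by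
      have := (h2.pow 2).div_const 2
      simpa using this
    have : HasDerivAt (fun y : ℝ => Real.log y - (y - 1) + (y - 1)^2/2) (x⁻¹ - 1 + (x - 1)) x :=
      (h1.sub h2).add h3
    convert this using 1
    field_simp
    ring
  have mono : MonotoneOn (fun y : ℝ => Real.log y - (y - 1) + (y - 1)^2/2) (Set.Icc a b) := by
    apply monotoneOn_of_deriv_nonneg (convex_Icc a b)
    · exact fun x hx => ((hd x hx).continuousAt).continuousWithinAt
    · intro x hx
      have hx' : x ∈ Set.Icc a b := interior_subset hx
      exact ((hd x hx').differentiableAt).differentiableWithinAt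
    · intro x hx
      have hx' : x ∈ Set.Icc a b := interior_subset hx
      rw [(hd x hx').deriv]
      have hx0 : 0 < x := lt_of_lt_of_le ha hx'.1
      positivity
  exact mono (Set.left_mem_Icc.2 hab) (Set.right_mem_Icc.2 hab) hab

/-- cubic lower bound for x log x on [0,∞) -/
lemma mul_log_cubic_lb (x : ℝ) (hx : 0 ≤ x) :
    (x - 1) + (x - 1)^2/2 - (x - 1)^3/6 ≤ x * Real.log x := by
  rcases eq_or_lt_of_le hx with h | hx0
  · rw [← h]; norm_num
  have hd : ∀ y : ℝ, 0 < y → HasDerivAt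
      (fun z : ℝ => z * Real.log z - ((z - 1) + (z - 1)^2/2 - (z - 1)^3/6))
      (Real.log y - (y - 1) + (y - 1)^2/2) y := by
    intro y hy
    have h1 : HasDerivAt (fun z : ℝ => z * Real.log z) (Real.log y + 1) y :=
      Real.hasDerivAt_mul_log hy.ne'
    have h2 : HasDerivAt (fun z : ℝ => z - 1) 1 y := (hasDerivAt_id y).sub_const 1
    have h3 : HasDerivAt (fun z : ℝ => (z - 1) + (z - 1)^2/2 - (z - 1)^3/6)
        (1 + (y - 1) - (y - 1)^2/2) y := by
      have hq := (h2.pow 2).div_const 2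
      have hc := (h2.pow 3).div_const 6
      have : HasDerivAt (fun z : ℝ => (z - 1) + (z - 1)^2/2 - (z - 1)^3/6)
          (1 + ↑2 * (y - 1) ^ (2 - 1) * 1 / 2 - ↑3 * (y - 1) ^ (3 - 1) * 1 / 6) y :=
        (h2.add hq).sub hc
      convert this using 1
      push_cast
      ring
    have : HasDerivAt (fun z : ℝ => z * Real.log z - ((z - 1) + (z - 1)^2/2 - (z - 1)^3/6))
        (Real.log y + 1 - (1 + (y - 1) - (y - 1)^2/2)) y := h1.sub h3
    convert this using 1
    ring
  rcases le_or_gt 1 x with h1 | h1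
  · -- monotone on [1,x]
    have mono : MonotoneOn (fun z : ℝ => z * Real.log z - ((z - 1) + (z - 1)^2/2 - (z - 1)^3/6))
        (Set.Icc 1 x) := by
      apply monotoneOn_of_deriv_nonneg (convex_Icc 1 x)
      · intro z hz
        exact ((hd z (lt_of_lt_of_le one_pos hz.1)).continuousAt).continuousWithinAt
      · intro z hz
        have hz' : z ∈ Set.Icc 1 x := interior_subset hz
        exact ((hd z (lt_of_lt_of_le one_pos hz'.1)).differentiableAt).differentiableWithinAt
      · intro z hz
        have hz' : z ∈ Set.Icc 1 x := interior_subset hz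
        have hz0 : (0:ℝ) < z := lt_of_lt_of_le one_pos hz'.1
        rw [(hd z hz0).deriv]
        have := g_mono one_pos hz'.1
        simpa using this
    have := mono (Set.left_mem_Icc.2 h1) (Set.right_mem_Icc.2 h1) h1
    simp only [Real.log_one] at this
    nlinarith [this]
  · -- antitone on [x,1]
    have anti : AntitoneOn (fun z : ℝ => z * Real.log z - ((z - 1) + (z - 1)^2/2 - (z - 1)^3/6))
        (Set.Icc x 1) := by
      apply antitoneOn_of_deriv_nonpos (convex_Icc x 1)
      · intro z hz
        exact ((hd z (lt_of_lt_of_le hx0 hz.1)).continuousAt).continuousWithinAt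
      · intro z hz
        have hz' : z ∈ Set.Icc x 1 := interior_subset hz
        exact ((hd z (lt_of_lt_of_le hx0 hz'.1)).differentiableAt).differentiableWithinAt
      · intro z hz
        have hz' : z ∈ Set.Icc x 1 := interior_subset hz
        have hz0 : (0:ℝ) < z := lt_of_lt_of_le hx0 hz'.1
        rw [(hd z hz0).deriv]
        have := g_mono hz0 hz'.2
        simp only [Real.log_one] at this
        nlinarith [this]
    have := anti (Set.left_mem_Icc.2 h1.le) (Set.right_mem_Icc.2 h1.le) h1.le
    simp only [Real.log_one] at this
    nlinarith [this]

lemma key_ineq (A B : ℝ) (hA : 0 ≤ A) (hB : 0 ≤ B) (hAB : A + B ≤ 2) :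
    |A^2 + B^2 - 2| ≤ 6*(2 - A - B) + 2*(A*Real.log A + B*Real.log B) := by
  have cA := mul_log_cubic_lb A hA
  have cB := mul_log_cubic_lb B hB
  have he : (0:ℝ) ≤ 2 - A - B := by linarith
  rw [abs_le]
  constructor
  · -- -(RHS) ≤ A^2+B^2-2 : case (II)
    nlinarith [mul_nonneg (sq_nonneg (A-1)) (by linarith : (0:ℝ) ≤ 2 - A),
      mul_nonneg (sq_nonneg (B-1)) (by linarith : (0:ℝ) ≤ 2 - B), sq_nonneg (A-1), sq_nonneg (B-1)]
  · -- A^2+B^2-2 ≤ RHS : case (I), uses 6e + e^3/3 + e u^2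
    nlinarith [mul_nonneg he (sq_nonneg (A-B)), pow_nonneg he 3, he]

/-- rpow lower bound: p^α ≥ p^(1/2) (1 + (α-1/2) log p) -/
lemma rpow_lb (p α : ℝ) (hp : 0 ≤ p) (hα0 : 1/2 < α) :
    p ^ ((1:ℝ)/2) + (2*α - 1) * (p ^ ((1:ℝ)/2) * Real.log (p ^ ((1:ℝ)/2))) ≤ p ^ α := by
  rcases eq_or_lt_of_le hp with h | hp0
  · rw [← h, Real.zero_rpow (by norm_num : (1:ℝ)/2 ≠ 0), Real.zero_rpow (by linarith : α ≠ 0)]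
    simp
  · have hA : p ^ ((1:ℝ)/2) = p ^ ((1:ℝ)/2) := rfl
    have hlog : Real.log (p ^ ((1:ℝ)/2)) = (1/2) * Real.log p := Real.log_rpow hp0 _
    have hsplit : p ^ α = p ^ ((1:ℝ)/2) * p ^ (α - 1/2) := by
      rw [← Real.rpow_add hp0]; ring_nf
    have hexp : p ^ (α - 1/2) = Real.exp ((α - 1/2) * Real.log p) := by
      rw [Real.rpow_def_of_pos hp0, mul_comm]
    have h1 : 1 + (α - 1/2) * Real.log p ≤ p ^ (α - 1/2) := by
      rw [hexp]; exact (Real.add_one_le_exp _).trans_eq' (by ring)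
    have hA0 : 0 ≤ p ^ ((1:ℝ)/2) := Real.rpow_nonneg hp _
    calc p ^ ((1:ℝ)/2) + (2*α - 1) * (p ^ ((1:ℝ)/2) * Real.log (p ^ ((1:ℝ)/2)))
        = p ^ ((1:ℝ)/2) * (1 + (α - 1/2) * Real.log p) := by rw [hlog]; ring
      _ ≤ p ^ ((1:ℝ)/2) * p ^ (α - 1/2) := by
          exact mul_le_mul_of_nonneg_left h1 hA0
      _ = p ^ α := hsplit.symm


lemma pm_bound (s τ : ℝ) : (1+s)*(1+τ)*((1-s)*(1-τ)) ≤ (1 - s*τ)^2 := by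
  nlinarith [sq_nonneg (s - τ)]

lemma st_le_one (s τ : ℝ) (hs1 : 0 ≤ 1+s) (hs2 : 0 ≤ 1-s) (ht1 : 0 ≤ 1+τ) (ht2 : 0 ≤ 1-τ) :
    s * τ ≤ 1 := by
  nlinarith [mul_nonneg hs2 ht1, mul_nonneg hs1 ht2]

lemma AB_le_two (s τ A B : ℝ) (hA0 : 0 ≤ A) (hB0 : 0 ≤ B)
    (hq : A^2 + B^2 = 2 + 2*(s*τ)) (hABm : A * B ≤ 1 - s*τ) : A + B ≤ 2 := by
  nlinarith [hq, hABm, hA0, hB0]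

lemma assemble (K2 KA A B PA MA LA LB u1 u2 t : ℝ)
    (hKA : 0 < KA) (hK : KA ≤ K2) (hAB : A + B ≤ 2)
    (hPA : A + t*LA ≤ PA) (hMA : B + t*LB ≤ MA)
    (hkey : 2*(u1*u2) ≤ 6*(2 - A - B) + 2*(LA + LB))
    (ht0 : 0 ≤ t) (ht1 : t ≤ 1) :
    K2 - 1/4*KA - ((K2*A - 1/4*(KA*PA)) + (K2*B - 1/4*(KA*MA)))/2 ≥
      t/32 * KA * (2*u1) * (2*u2) := by
  have hG : 0 ≤ 1 - (A+B)/2 := by linarith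
  have t1 : KA * (1 - (A+B)/2) ≤ K2 * (1 - (A+B)/2) :=
    mul_le_mul_of_nonneg_right hK hG
  have t2 : KA * ((A + B + t*(LA+LB))/8 - 1/4) ≤ KA * ((PA + MA)/8 - 1/4) := by
    apply mul_le_mul_of_nonneg_left _ hKA.le
    linarith
  have scal : t * (u1*u2) / 8 ≤ 3/4*(1 - (A+B)/2) + t*(LA+LB)/8 := by
    have h1 : t*(2*(u1*u2)) ≤ t*(6*(2 - A - A + (A - B)) + 2*(LA+LB)) := by
      apply mul_le_mul_of_nonneg_left _ ht0
      linarith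
    have h2 : 0 ≤ (1 - t) * (2 - A - B) := mul_nonneg (by linarith) (by linarith)
    nlinarith [h1, h2]
  have t3 : KA * (t * (u1*u2) / 8) ≤ KA * (3/4*(1 - (A+B)/2) + t*(LA+LB)/8) :=
    mul_le_mul_of_nonneg_left scal hKA.le
  nlinarith [t1, t2, t3]

set_option maxHeartbeats 1000000 in
theorem bellman_4_7_4_8 (α : ℝ) (hα0 : 1 / 2 < α) (hα1 : α ≤ 1) :
    (∀ x y : ℝ, 0 ≤ x → 0 ≤ y → x * y ≤ 1 →
      0 ≤ (x * y) ^ ((1 : ℝ) / 2) - (1 / 4) * (x * y) ^ α ∧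
      (x * y) ^ ((1 : ℝ) / 2) - (1 / 4) * (x * y) ^ α ≤ (x * y) ^ ((1 : ℝ) / 2)) ∧
    (∃ c : ℝ, 0 < c ∧
      ∀ x y xp xm yp ym : ℝ, 0 < x → 0 < y →
        0 ≤ xp → 0 ≤ xm → 0 ≤ yp → 0 ≤ ym →
        xp * yp ≤ 1 → xm * ym ≤ 1 → x * y ≤ 1 →
        x = (xp + xm) / 2 → y = (yp + ym) / 2 →
        (∀ t : ℝ, -1 ≤ t → t ≤ 1 →
          (x + t * ((xp - xm) / 2)) * (y + t * ((yp - ym) / 2)) ≤ 1) →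
        ((x * y) ^ ((1 : ℝ) / 2) - (1 / 4) * (x * y) ^ α) -
            (((xp * yp) ^ ((1 : ℝ) / 2) - (1 / 4) * (xp * yp) ^ α) +
              ((xm * ym) ^ ((1 : ℝ) / 2) - (1 / 4) * (xm * ym) ^ α)) / 2 ≥
          c * (x * y) ^ α * (|xp - xm| / x) * (|yp - ym| / y)) := by
  constructor
  · intro x y hx hy hxy
    have hk : (0:ℝ) ≤ x * y := mul_nonneg hx hy
    have h1 : (x*y) ^ α ≤ (x*y) ^ ((1:ℝ)/2) := by
      rcases eq_or_lt_of_le hk with h | h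
      · rw [← h, Real.zero_rpow (by linarith : α ≠ 0),
          Real.zero_rpow (by norm_num : (1:ℝ)/2 ≠ 0)]
      · exact Real.rpow_le_rpow_of_exponent_ge h hxy (by linarith)
    have h2 : 0 ≤ (x*y) ^ α := Real.rpow_nonneg hk _
    constructor <;> linarith
  · refine ⟨(2*α - 1)/32, by linarith, ?_⟩
    intro x y xp xm yp ym hx hy hxp hxm hyp hym hpp hmm hk1 hxe hye _hseg
    set s : ℝ := (xp - xm)/(2*x) with hs
    set τ : ℝ := (yp - ym)/(2*y) with hτ
    clear_value s τ
    have h2x : xp + xm = 2*x := by linarith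
    have h2y : yp + ym = 2*y := by linarith
    have hxpe : xp = x * (1 + s) := by
      rw [hs]; field_simp; linear_combination h2x
    have hxme : xm = x * (1 - s) := by
      rw [hs]; field_simp; linear_combination h2x
    have hype : yp = y * (1 + τ) := by
      rw [hτ]; field_simp; linear_combination h2y
    have hyme : ym = y * (1 - τ) := by
      rw [hτ]; field_simp; linear_combination h2y
    have hs1 : 0 ≤ 1 + s := by
      by_contra h; push_neg at h; nlinarith [hxp, hxpe]
    have hs2 : 0 ≤ 1 - s := by
      by_contra h; push_neg at h; nlinarith [hxm, hxme]
    have ht1 : 0 ≤ 1 + τ := by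
      by_contra h; push_neg at h; nlinarith [hyp, hype]
    have ht2 : 0 ≤ 1 - τ := by
      by_contra h; push_neg at h; nlinarith [hym, hyme]
    set p : ℝ := (1 + s) * (1 + τ) with hpdef
    set m : ℝ := (1 - s) * (1 - τ) with hmdef
    clear_value p m
    have hp0 : 0 ≤ p := by rw [hpdef]; exact mul_nonneg hs1 ht1
    have hm0 : 0 ≤ m := by rw [hmdef]; exact mul_nonneg hs2 ht2
    have hk0 : 0 < x * y := mul_pos hx hy
    have hppe : xp * yp = (x*y) * p := by rw [hxpe, hype, hpdef]; ring
    have hmme : xm * ym = (x*y) * m := by rw [hxme, hyme, hmdef]; ring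
    rw [hppe, hmme, Real.mul_rpow hk0.le hp0, Real.mul_rpow hk0.le hp0,
        Real.mul_rpow hk0.le hm0, Real.mul_rpow hk0.le hm0]
    have habsx : |xp - xm| / x = 2 * |s| := by
      rw [hxpe, hxme, show x*(1+s) - x*(1-s) = x*(2*s) by ring, abs_mul,
        abs_of_pos hx, abs_mul, abs_of_pos (by norm_num : (0:ℝ) < 2)]
      field_simp
    have habsy : |yp - ym| / y = 2 * |τ| := by
      rw [hype, hyme, show y*(1+τ) - y*(1-τ) = y*(2*τ) by ring, abs_mul,
        abs_of_pos hy, abs_mul, abs_of_pos (by norm_num : (0:ℝ) < 2)]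
      field_simp
    rw [habsx, habsy]
    -- abbreviations
    have hA0 : 0 ≤ p ^ ((1:ℝ)/2) := Real.rpow_nonneg hp0 _
    have hB0 : 0 ≤ m ^ ((1:ℝ)/2) := Real.rpow_nonneg hm0 _
    set A : ℝ := p ^ ((1:ℝ)/2) with hAdef
    set B : ℝ := m ^ ((1:ℝ)/2) with hBdef
    clear_value A B
    have hA2 : A^2 = p := by
      rw [hAdef, ← Real.rpow_natCast (p ^ ((1:ℝ)/2)) 2, ← Real.rpow_mul hp0]
      norm_num
    have hB2 : B^2 = m := by
      rw [hBdef, ← Real.rpow_natCast (m ^ ((1:ℝ)/2)) 2, ← Real.rpow_mul hm0]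
      norm_num
    have hq : A^2 + B^2 = 2 + 2*(s*τ) := by rw [hA2, hB2, hpdef, hmdef]; ring
    -- A + B ≤ 2
    have hst1 : s*τ ≤ 1 := st_le_one s τ hs1 hs2 ht1 ht2
    have hpm : p * m ≤ (1 - s*τ)^2 := by rw [hpdef, hmdef]; exact pm_bound s τ
    have hABm : A * B ≤ 1 - s*τ := by
      rw [hAdef, hBdef, ← Real.mul_rpow hp0 hm0]
      have h := Real.rpow_le_rpow (mul_nonneg hp0 hm0) hpm (by norm_num : (0:ℝ) ≤ 1/2)
      have h2 : ((1 - s*τ)^2) ^ ((1:ℝ)/2) = 1 - s*τ := by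
        rw [← Real.rpow_natCast (1 - s*τ) 2, ← Real.rpow_mul (by linarith : (0:ℝ) ≤ 1 - s*τ)]
        norm_num
      rw [h2] at h
      exact h
    have hABle : A + B ≤ 2 := AB_le_two s τ A B hA0 hB0 hq hABm
    -- rpow lower bounds
    have hPA := rpow_lb p α hp0 hα0
    have hMA := rpow_lb m α hm0 hα0
    rw [← hAdef] at hPA
    rw [← hBdef] at hMA
    -- key inequality
    have hkey := key_ineq A B hA0 hB0 hABle
    have habsq : |A^2 + B^2 - 2| = 2 * (|s| * |τ|) := by
      rw [hq, show (2:ℝ) + 2*(s*τ) - 2 = 2*(s*τ) by ring, abs_mul, abs_mul,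
        abs_of_pos (by norm_num : (0:ℝ) < 2)]
    rw [habsq] at hkey
    have hgoal := assemble ((x*y)^((1:ℝ)/2)) ((x*y)^α) A B (p^α) (m^α)
      (A * Real.log A) (B * Real.log B) |s| |τ| (2*α - 1)
      (Real.rpow_pos_of_pos hk0 α)
      (Real.rpow_le_rpow_of_exponent_ge hk0 hk1 (by linarith))
      hABle hPA hMA (by linarith [hkey]) (by linarith) (by linarith)
    linarith [hgoal]
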